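/- Let l ≥ 0, 0 ≤ i ≤ l, s ≥ 0 be integers and let j ∈ ℤ. Then {s}_q! divides the Laurent polynomial Σ_{p=0}^{s} (−1)^{s−p} q^{p(p+1)/2 + (2i−s)p} [s choose p]_q · {(j+p)+l−1}_{q, l−i} · {(j+p)−1}_{q, l−i} in ℤ[q,q^{-1}]. (This is the Laurent-polynomial content of the statement that {l}_q!·tr_q^{P̃'_l} maps Lusztig's integral form U_{ℤ,q}^{ev} into ℤ[q,q^{-1}].) -/

import Mathlib

open LaurentPolynomial Finset

/-- `{i}_q = q^i - 1` in `ℤ[q,q⁻¹]`. -/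
noncomputable def qInt (i : ℤ) : LaurentPolynomial ℤ := T i - 1

/-- `{i}_{q,n} = {i}_q {i-1}_q ⋯ {i-n+1}_q`. -/
noncomputable def qShift (i : ℤ) (n : ℕ) : LaurentPolynomial ℤ :=
  ∏ r ∈ Finset.range n, qInt (i - r)

/-- `{n}_q! = {n}_{q,n}`. -/
noncomputable def qFact (n : ℕ) : LaurentPolynomial ℤ := qShift n n



lemma T_ne_one' {k : ℤ} (hk : k ≠ 0) : (T k : LaurentPolynomial ℤ) ≠ 1 := by
  intro h
  rw [← LaurentPolynomial.single_zero_one_eq_one, LaurentPolynomial.T,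
    AddMonoidAlgebra.single_inj] at h
  simp [hk] at h

lemma qInt_ne_zero {k : ℤ} (hk : k ≠ 0) : qInt k ≠ 0 := by
  simpa [qInt, sub_eq_zero] using T_ne_one' hk

lemma qFact_ne_zero (n : ℕ) : qFact n ≠ 0 := by
  rw [qFact, qShift]
  refine Finset.prod_ne_zero_iff.mpr fun r hr => qInt_ne_zero ?_
  have := Finset.mem_range.mp hr
  omega

lemma qShift_succ (i : ℤ) (n : ℕ) : qShift i (n+1) = qShift i n * qInt (i - n) := by
  simp [qShift, Finset.prod_range_succ]

lemma qShift_succ' (i : ℤ) (n : ℕ) : qShift i (n+1) = qInt i * qShift (i-1) n := by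
  rw [qShift, Finset.prod_range_succ', mul_comm]
  congr 1
  · simp
  · rw [qShift]
    refine Finset.prod_congr rfl fun r _ => ?_
    congr 1
    push_cast
    ring

lemma qFact_succ (n : ℕ) : qFact (n+1) = qInt ((n:ℤ)+1) * qFact n := by
  rw [qFact, qFact]
  have : ((n:ℕ)+1 : ℤ) = (n:ℤ) + 1 := by push_cast; ring
  rw [show ((n+1 : ℕ) : ℤ) = (n:ℤ)+1 by push_cast; ring, qShift_succ']
  norm_num

lemma B_zero (B : ℕ → ℕ → LaurentPolynomial ℤ)
    (hB : ∀ a r : ℕ, B a r * qFact r = qShift a r) (a : ℕ) : B a 0 = 1 := by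
  have h := hB a 0
  simpa [qFact, qShift] using h

lemma B_high (B : ℕ → ℕ → LaurentPolynomial ℤ)
    (hB : ∀ a r : ℕ, B a r * qFact r = qShift a r) {s p : ℕ} (h : s < p) : B s p = 0 := by
  have h1 := hB s p
  have h2 : qShift (s:ℤ) p = 0 := by
    rw [qShift]
    refine Finset.prod_eq_zero (Finset.mem_range.mpr h) ?_
    simp [qInt]
  rw [h2] at h1
  rcases mul_eq_zero.mp h1 with h' | h'
  · exact h'
  · exact absurd h' (qFact_ne_zero p)

lemma B_pascal (B : ℕ → ℕ → LaurentPolynomial ℤ)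
    (hB : ∀ a r : ℕ, B a r * qFact r = qShift a r) (a r : ℕ) :
    B (a+1) (r+1) = B a r + T ((r:ℤ)+1) * B a (r+1) := by
  apply mul_right_cancel₀ (qFact_ne_zero (r+1))
  rw [hB]
  have h1 : qShift ((a+1 : ℕ) : ℤ) (r+1) = qInt ((a:ℤ)+1) * qShift (a:ℤ) r := by
    rw [show ((a+1 : ℕ) : ℤ) = (a:ℤ)+1 by push_cast; ring, qShift_succ']
    norm_num
  have h2 := qFact_succ r
  have h3 := hB a r
  have h4 := hB a (r+1)
  have h5 : qShift (a:ℤ) (r+1) = qShift (a:ℤ) r * qInt ((a:ℤ) - r) := qShift_succ a r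
  have ht : (T ((r:ℤ)+1) : LaurentPolynomial ℤ) * T ((a:ℤ) - r) = T ((a:ℤ)+1) := by
    rw [← T_add (R := ℤ)]; congr 1; ring
  have hkey : qInt ((a:ℤ)+1) = qInt ((r:ℤ)+1) + T ((r:ℤ)+1) * qInt ((a:ℤ) - r) := by
    simp only [qInt]
    linear_combination -ht
  linear_combination h1 + qShift (a:ℤ) r * hkey - qInt ((r:ℤ)+1) * h3 - B a r * h2
    - T ((r:ℤ)+1) * h5 - T ((r:ℤ)+1) * h4

lemma htri (p : ℤ) : p*(p+1)/2 = p*(p-1)/2 + p := by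
  rw [show p*(p+1) = p*(p-1) + p*2 by ring,
    Int.add_mul_ediv_right _ _ (by norm_num : (2:ℤ) ≠ 0)]

lemma htri' (p : ℤ) : (p+1)*((p+1)-1)/2 = p*(p-1)/2 + p := by
  rw [show (p+1)*((p+1)-1) = p*(p-1) + p*2 by ring,
    Int.add_mul_ediv_right _ _ (by norm_num : (2:ℤ) ≠ 0)]

lemma qbinom (B : ℕ → ℕ → LaurentPolynomial ℤ)
    (hB : ∀ a r : ℕ, B a r * qFact r = qShift a r) :
    ∀ (s : ℕ) (m : ℤ),
    ∑ p ∈ range (s+1), (-1 : LaurentPolynomial ℤ)^(s-p) * T ((p:ℤ)*((p:ℤ)-1)/2 + m*p) * B s p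
      = ∏ r ∈ range s, (T (m + r) - 1) := by
  intro s
  induction s with
  | zero =>
    intro m
    have h0 : ((0:ℕ):ℤ)*(((0:ℕ):ℤ)-1)/2 + m*((0:ℕ):ℤ) = 0 := by norm_num
    simp [B_zero B hB, h0]
  | succ s ih =>
    intro m
    rw [Finset.sum_range_succ']
    have hsplit : ∀ p ∈ range (s+1),
        (-1 : LaurentPolynomial ℤ)^(s+1-(p+1)) *
            T (((p+1:ℕ):ℤ)*(((p+1:ℕ):ℤ)-1)/2 + m*((p+1:ℕ):ℤ)) * B (s+1) (p+1)
          = T m * ((-1)^(s-p) * T ((p:ℤ)*((p:ℤ)-1)/2 + (m+1)*p) * B s p)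
            + (-1 : LaurentPolynomial ℤ)^(s+1-(p+1)) *
                T (((p+1:ℕ):ℤ)*(((p+1:ℕ):ℤ)-1)/2 + (m+1)*((p+1:ℕ):ℤ)) * B s (p+1) := by
      intro p hp
      rw [B_pascal B hB, show s+1-(p+1) = s-p by omega]
      push_cast
      have hA := htri' (p:ℤ)
      have ht1 : (T (((p:ℤ)+1)*(((p:ℤ)+1)-1)/2 + m*((p:ℤ)+1)) : LaurentPolynomial ℤ)
          = T m * T ((p:ℤ)*((p:ℤ)-1)/2 + (m+1)*p) := by
        rw [← T_add (R := ℤ)]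
        congr 1
        linear_combination hA
      have ht2 : (T (((p:ℤ)+1)*(((p:ℤ)+1)-1)/2 + m*((p:ℤ)+1)) : LaurentPolynomial ℤ)
            * T ((p:ℤ)+1)
          = T (((p:ℤ)+1)*(((p:ℤ)+1)-1)/2 + (m+1)*((p:ℤ)+1)) := by
        rw [← T_add (R := ℤ)]
        congr 1
        ring
      linear_combination ((-1:LaurentPolynomial ℤ)^(s-p) * B s p) * ht1
        + ((-1:LaurentPolynomial ℤ)^(s-p) * B s (p+1)) * ht2
    rw [Finset.sum_congr rfl hsplit, Finset.sum_add_distrib, ← Finset.mul_sum, ih (m+1)]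
    have hg0 : (-1 : LaurentPolynomial ℤ)^(s+1-0) *
        T (((0:ℕ):ℤ)*(((0:ℕ):ℤ)-1)/2 + m*((0:ℕ):ℤ)) * B (s+1) 0
        = (-1 : LaurentPolynomial ℤ)^(s+1-0) *
        T (((0:ℕ):ℤ)*(((0:ℕ):ℤ)-1)/2 + (m+1)*((0:ℕ):ℤ)) * B s 0 := by
      simp [B_zero B hB]
    rw [add_assoc, hg0, ← Finset.sum_range_succ' (fun q => (-1 : LaurentPolynomial ℤ)^(s+1-q) * T ((q:ℤ)*((q:ℤ)-1)/2 + (m+1)*(q:ℤ)) * B s q) (s+1)]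
    have hG : ∑ q ∈ range (s+1+1),
        (-1 : LaurentPolynomial ℤ)^(s+1-q) * T ((q:ℤ)*((q:ℤ)-1)/2 + (m+1)*q) * B s q
        = - ∏ r ∈ range s, (T ((m+1) + r) - 1) := by
      rw [Finset.sum_range_succ, B_high B hB (lt_add_one s), mul_zero, add_zero, ← ih (m+1),
        ← Finset.sum_neg_distrib]
      refine Finset.sum_congr rfl fun q hq => ?_
      have hq' := Finset.mem_range.mp hq
      rw [show s+1-q = (s-q)+1 by omega, pow_succ]
      ring
    rw [hG]
    rw [Finset.prod_range_succ']
    have : ∀ r ∈ range s, (T (m + ((r+1:ℕ):ℤ)) - 1 : LaurentPolynomial ℤ)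
        = T ((m+1) + (r:ℤ)) - 1 := by
      intro r _
      congr 1
      push_cast
      ring
    rw [Finset.prod_congr rfl this]
    simp only [Nat.cast_zero, add_zero]
    ring

lemma T_sum {α : Type*} (s : Finset α) (h : α → ℤ) :
    (T (∑ t ∈ s, h t) : LaurentPolynomial ℤ) = ∏ t ∈ s, T (h t) := by
  induction s using Finset.cons_induction with
  | empty => simp
  | cons a s ha ih => rw [Finset.sum_cons, Finset.prod_cons, T_add, ih]

lemma prod_eq_qShift (b : ℤ) (s : ℕ) :
    ∏ r ∈ range s, (T (b + r) - 1 : LaurentPolynomial ℤ) = qShift (b + s - 1) s := by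
  rw [qShift, ← Finset.prod_range_reflect]
  refine Finset.prod_congr rfl fun r hr => ?_
  have hr' := Finset.mem_range.mp hr
  rw [qInt]
  congr 2
  omega

lemma qFact_dvd_qShift (B : ℕ → ℕ → LaurentPolynomial ℤ)
    (hB : ∀ a r : ℕ, B a r * qFact r = qShift a r) (s : ℕ) (c : ℤ) :
    qFact s ∣ qShift c s := by
  rcases le_or_gt 0 c with hc | hc
  · obtain ⟨a, rfl⟩ : ∃ a : ℕ, (a:ℤ) = c := ⟨c.toNat, Int.toNat_of_nonneg hc⟩
    exact ⟨B a s, by rw [← hB a s]; ring⟩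
  · have h1 : qShift c s
        = (∏ k ∈ range s, (-T (c - k))) * ∏ k ∈ range s, (T ((-c) + k) - 1) := by
      rw [qShift, ← Finset.prod_mul_distrib]
      refine Finset.prod_congr rfl fun k _ => ?_
      have ht : (T (c - (k:ℤ)) : LaurentPolynomial ℤ) * T (-c + k) = 1 := by
        rw [← T_add (R := ℤ), show c - (k:ℤ) + (-c + k) = 0 by ring, T_zero]
      rw [qInt]
      linear_combination ht
    rw [h1, prod_eq_qShift]
    obtain ⟨a, ha⟩ : ∃ a : ℕ, (a:ℤ) = -c + s - 1 := ⟨(-c + s - 1).toNat, Int.toNat_of_nonneg (by omega)⟩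
    rw [← ha]
    exact Dvd.dvd.mul_left ⟨B a s, by rw [← hB a s]; ring⟩ _

/-- For `0 ≤ i ≤ l`, `s ≥ 0` and `j ∈ ℤ`, the `q`-factorial `{s}_q!` divides
`Σ_{p=0}^{s} (−1)^{s−p} q^{p(p+1)/2 + (2i−s)p} [s choose p]_q
  {(j+p)+l−1}_{q,l−i} {(j+p)−1}_{q,l−i}`,
where the Gaussian binomial `B a r = [a choose r]_q` is characterized by
`[a choose r]_q · {r}_q! = {a}_{q,r}`. -/
theorem qFact_dvd_trace_sum (l i s : ℕ) (hi : i ≤ l) (j : ℤ)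
    (B : ℕ → ℕ → LaurentPolynomial ℤ)
    (hB : ∀ a r : ℕ, B a r * qFact r = qShift a r) :
    qFact s ∣ ∑ p ∈ Finset.range (s + 1),
      (-1) ^ (s - p) * T ((p : ℤ) * (p + 1) / 2 + (2 * (i : ℤ) - s) * p) * B s p *
        qShift ((j + p) + l - 1) (l - i) * qShift ((j + p) - 1) (l - i) := by
  set n := l - i with hn
  set c : ℕ → ℤ := fun t => if t < n then (l:ℤ) - 1 - t else -1 - ((t:ℤ) - n) with hc
  have hF : ∀ x : ℤ, qShift (x + l - 1) n * qShift (x - 1) n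
      = ∏ t ∈ range (n+n), (T (x + c t) - 1 : LaurentPolynomial ℤ) := by
    intro x
    rw [Finset.prod_range_add]
    congr 1
    · rw [qShift]
      refine Finset.prod_congr rfl fun t ht => ?_
      have ht' := Finset.mem_range.mp ht
      rw [qInt, hc]
      simp only [if_pos ht']
      congr 1
      ring
    · rw [qShift]
      refine Finset.prod_congr rfl fun k _ => ?_
      rw [qInt, hc]
      simp only
      rw [if_neg (by omega)]
      congr 1
      push_cast
      ring
  have hexp : ∀ x : ℤ, ∏ t ∈ range (n+n), (T (x + c t) - 1 : LaurentPolynomial ℤ)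
      = ∑ S ∈ (range (n+n)).powerset,
          T ((S.card : ℤ) * x + ∑ t ∈ S, c t) * (-1)^((range (n+n) \ S).card) := by
    intro x
    have h1 : ∀ t ∈ range (n+n), (T (x + c t) - 1 : LaurentPolynomial ℤ)
        = T (x + c t) + (-1) := fun t _ => by ring
    rw [Finset.prod_congr rfl h1, Finset.prod_add]
    refine Finset.sum_congr rfl fun S hS => ?_
    congr 1
    · rw [← T_sum S (fun t => x + c t)]
      congr 1
      rw [Finset.sum_add_distrib, Finset.sum_const, nsmul_eq_mul]
    · exact Finset.prod_const _
  have hstep : ∀ p ∈ range (s+1),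
      (-1 : LaurentPolynomial ℤ) ^ (s - p) *
          T ((p : ℤ) * (p + 1) / 2 + (2 * (i : ℤ) - s) * p) * B s p *
        qShift ((j + p) + l - 1) n * qShift ((j + p) - 1) n
      = ∑ S ∈ (range (n+n)).powerset,
          (-1 : LaurentPolynomial ℤ)^((range (n+n) \ S).card)
            * T ((S.card : ℤ) * j + ∑ t ∈ S, c t)
            * ((-1)^(s-p) * T ((p:ℤ)*((p:ℤ)-1)/2 + (2*(i:ℤ) - s + 1 + S.card)*p) * B s p) := by
    intro p hp
    rw [mul_assoc, hF (j + p), hexp (j + p), Finset.mul_sum]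
    refine Finset.sum_congr rfl fun S hS => ?_
    have hT : (T ((p : ℤ) * (p + 1) / 2 + (2 * (i : ℤ) - s) * p) : LaurentPolynomial ℤ)
        * T ((S.card : ℤ) * (j + p) + ∑ t ∈ S, c t)
        = T ((S.card : ℤ) * j + ∑ t ∈ S, c t)
          * T ((p:ℤ)*((p:ℤ)-1)/2 + (2*(i:ℤ) - s + 1 + S.card)*p) := by
      rw [← T_add (R := ℤ), ← T_add (R := ℤ)]
      congr 1
      linear_combination htri p
    linear_combination ((-1:LaurentPolynomial ℤ)^(s-p) * B s p
      * (-1:LaurentPolynomial ℤ)^((range (n+n) \ S).card)) * hT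
  rw [Finset.sum_congr rfl hstep, Finset.sum_comm]
  refine Finset.dvd_sum fun S hS => ?_
  rw [← Finset.mul_sum, qbinom B hB s (2*(i:ℤ) - s + 1 + S.card), prod_eq_qShift]
  exact Dvd.dvd.mul_left (qFact_dvd_qShift B hB s _) _
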